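/- Let 𝔤 be a finite-dimensional solvable Lie algebra over ℂ. Every element of 𝔫̄ = {X − ad_{sX} : X ∈ 𝔤} ⊆ 𝔤̄ = Im(ad_s) ⋉ 𝔤 is ad-nilpotent in 𝔤̄; that is, for each X ∈ 𝔤 the operator ad_{(−ad_{sX}, X)} on 𝔤̄ is nilpotent. -/

import Mathlib

open LieAlgebra

variable (M : Type*) [LieRing M] [LieAlgebra ℂ M]

/-- The semidirect product Lie ring `Der(M) ⋉ M`, with bracket
`⁅(D, x), (E, y)⁆ = (⁅D, E⁆, D y − E x + ⁅x, y⁆)`. -/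
noncomputable instance derSemidirectLieRing : LieRing (LieDerivation ℂ M M × M) :=
  { (inferInstance : AddCommGroup (LieDerivation ℂ M M × M)) with
    bracket := fun a b => (⁅a.1, b.1⁆, a.1 b.2 - b.1 a.2 + ⁅a.2, b.2⁆)
    add_lie := by
      intro a b c
      show (⁅a.1 + b.1, c.1⁆, (a.1 + b.1) c.2 - c.1 (a.2 + b.2) + ⁅a.2 + b.2, c.2⁆)
        = (⁅a.1, c.1⁆ + ⁅b.1, c.1⁆, (a.1 c.2 - c.1 a.2 + ⁅a.2, c.2⁆) + (b.1 c.2 - c.1 b.2 + ⁅b.2, c.2⁆))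
      refine Prod.ext (add_lie _ _ _) ?_
      simp only [LieDerivation.add_apply, map_add, add_lie]
      abel
    lie_add := by
      intro a b c
      show (⁅a.1, b.1 + c.1⁆, a.1 (b.2 + c.2) - (b.1 + c.1) a.2 + ⁅a.2, b.2 + c.2⁆)
        = (⁅a.1, b.1⁆ + ⁅a.1, c.1⁆, (a.1 b.2 - b.1 a.2 + ⁅a.2, b.2⁆) + (a.1 c.2 - c.1 a.2 + ⁅a.2, c.2⁆))
      refine Prod.ext (lie_add _ _ _) ?_
      simp only [LieDerivation.add_apply, map_add, lie_add]
      abel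
    lie_self := by
      intro a
      show (⁅a.1, a.1⁆, a.1 a.2 - a.1 a.2 + ⁅a.2, a.2⁆) = (0, 0)
      simp
    leibniz_lie := by
      intro a b c
      show (⁅a.1, ⁅b.1, c.1⁆⁆, a.1 (b.1 c.2 - c.1 b.2 + ⁅b.2, c.2⁆)
              - ⁅b.1, c.1⁆ a.2 + ⁅a.2, b.1 c.2 - c.1 b.2 + ⁅b.2, c.2⁆⁆)
        = (⁅⁅a.1, b.1⁆, c.1⁆, ⁅a.1, b.1⁆ c.2 - c.1 (a.1 b.2 - b.1 a.2 + ⁅a.2, b.2⁆)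
              + ⁅a.1 b.2 - b.1 a.2 + ⁅a.2, b.2⁆, c.2⁆)
          + (⁅b.1, ⁅a.1, c.1⁆⁆, b.1 (a.1 c.2 - c.1 a.2 + ⁅a.2, c.2⁆)
              - ⁅a.1, c.1⁆ b.2 + ⁅b.2, a.1 c.2 - c.1 a.2 + ⁅a.2, c.2⁆⁆)
      refine Prod.ext (leibniz_lie _ _ _) ?_
      simp only [Prod.snd_add, LieDerivation.commutator_apply, map_sub, map_add,
        LieDerivation.apply_lie_eq_add, lie_add, add_lie, lie_sub, sub_lie, lie_lie]
      rw [← lie_skew (c.1 a.2) b.2]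
      abel }

noncomputable instance derSemidirectLieAlgebra :
    LieAlgebra ℂ (LieDerivation ℂ M M × M) :=
  { lie_smul := by
      intro c a b
      show (⁅a.1, c • b.1⁆, a.1 (c • b.2) - (c • b.1) a.2 + ⁅a.2, c • b.2⁆)
        = c • (⁅a.1, b.1⁆, a.1 b.2 - b.1 a.2 + ⁅a.2, b.2⁆)
      refine Prod.ext (lie_smul _ _ _) ?_
      simp only [Prod.smul_snd, map_smul, LieDerivation.smul_apply, lie_smul, smul_sub, smul_add]
      try abel }

section Aux

variable {V : Type*} [AddCommGroup V] [Module ℂ V] [FiniteDimensional ℂ V]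

/-- If `[T, e] = λ • e` with `λ ≠ 0`, then `e` is nilpotent. -/
lemma aux_raise_nilpotent (T e : Module.End ℂ V) {lam : ℂ} (hlam : lam ≠ 0)
    (h : T * e - e * T = lam • e) : IsNilpotent e := by
  have hTe : T * e = e * T + lam • e := by rw [← h]; abel
  have hrel : ∀ μ : ℂ, (T - (μ + lam) • 1) * e = e * (T - μ • 1) := by
    intro μ
    rw [sub_mul, mul_sub, hTe, smul_mul_assoc, one_mul, mul_smul_comm, mul_one, add_smul]
    abel
  have hreln : ∀ (μ : ℂ) (n : ℕ), (T - (μ + lam) • 1) ^ n * e = e * (T - μ • 1) ^ n := by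
    intro μ n
    induction n with
    | zero => simp
    | succ n ih => rw [pow_succ, pow_succ, mul_assoc, hrel, ← mul_assoc, ih, mul_assoc]
  have hmap : ∀ μ : ℂ, ∀ v ∈ T.maxGenEigenspace μ, e v ∈ T.maxGenEigenspace (μ + lam) := by
    intro μ v hv
    rw [Module.End.mem_maxGenEigenspace] at hv ⊢
    obtain ⟨j, hj⟩ := hv
    refine ⟨j, ?_⟩
    have h1 := LinearMap.congr_fun (hreln μ j) v
    simpa [Module.End.mul_apply, hj] using h1
  have hiter : ∀ (j : ℕ) (μ : ℂ) (v : V), v ∈ T.maxGenEigenspace μ →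
      (e ^ j) v ∈ T.maxGenEigenspace (μ + j • lam) := by
    intro j
    induction j with
    | zero => intro μ v hv; simpa using hv
    | succ j ih =>
      intro μ v hv
      have h1 := hmap _ _ (ih μ v hv)
      have h2 : μ + (j + 1) • lam = μ + j • lam + lam := by rw [succ_nsmul]; ring
      rw [h2, pow_succ', Module.End.mul_apply]
      exact h1
  have hfin : {μ : ℂ | T.maxGenEigenspace μ ≠ ⊥}.Finite :=
    WellFoundedGT.finite_ne_bot_of_iSupIndep T.independent_maxGenEigenspace
  set n := hfin.toFinset.card + 1 with hn
  have hbot : ∀ μ : ℂ, ∃ j, 1 ≤ j ∧ j ≤ n ∧ T.maxGenEigenspace (μ + j • lam) = ⊥ := by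
    intro μ
    by_contra hcon
    push_neg at hcon
    have hsub : ∀ j ∈ Finset.Icc 1 n, μ + j • lam ∈ hfin.toFinset := by
      intro j hj
      rw [Set.Finite.mem_toFinset]
      exact hcon j (Finset.mem_Icc.mp hj).1 (Finset.mem_Icc.mp hj).2
    have hinj : Set.InjOn (fun j : ℕ => μ + j • lam) (Finset.Icc 1 n) := by
      intro a _ b _ hab
      simp only [nsmul_eq_mul] at hab
      have h3 : (a : ℂ) = b := by
        have := add_left_cancel hab
        exact mul_right_cancel₀ hlam this
      exact_mod_cast h3
    have hcard := Finset.card_le_card_of_injOn _ hsub hinj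
    rw [Nat.card_Icc] at hcard
    omega
  have hker : ∀ μ : ℂ, T.maxGenEigenspace μ ≤ LinearMap.ker (e ^ n) := by
    intro μ v hv
    obtain ⟨j, hj1, hjn, hjbot⟩ := hbot μ
    have h0 : (e ^ j) v = 0 := by
      have h1 := hiter j μ v hv
      rw [hjbot] at h1
      simpa using h1
    rw [LinearMap.mem_ker, ← Nat.sub_add_cancel hjn, pow_add, Module.End.mul_apply, h0, map_zero]
  refine ⟨n, ?_⟩
  ext v
  have hv : v ∈ LinearMap.ker (e ^ n) := by
    have htop := Module.End.iSup_maxGenEigenspace_eq_top T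
    have hmem : v ∈ (⊤ : Submodule ℂ V) := Submodule.mem_top
    rw [← htop] at hmem
    exact (iSup_le hker) hmem
  simpa using hv

/-- An endomorphism of a finite-dimensional complex vector space with no nonzero
eigenvalue is nilpotent. -/
lemma aux_no_eigen_nilpotent (f : Module.End ℂ V)
    (h : ∀ μ : ℂ, μ ≠ 0 → ∀ v : V, f v = μ • v → v = 0) : IsNilpotent f := by
  have hind : ∀ (μ : ℂ), μ ≠ 0 → ∀ (k : ℕ) (v : V), ((f - μ • 1) ^ k) v = 0 → v = 0 := by
    intro μ hμ k
    induction k with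
    | zero => intro v hv; simpa using hv
    | succ k ih =>
      intro v hv
      rw [pow_succ, Module.End.mul_apply] at hv
      have h1 : (f - μ • 1) v = 0 := ih _ hv
      have h2 : f v = μ • v := by
        rw [LinearMap.sub_apply, LinearMap.smul_apply, Module.End.one_apply, sub_eq_zero] at h1
        exact h1
      exact h μ hμ v h2
  have hbot : ∀ μ : ℂ, μ ≠ 0 → f.maxGenEigenspace μ = ⊥ := by
    intro μ hμ
    rw [eq_bot_iff]
    intro v hv
    rw [Module.End.mem_maxGenEigenspace] at hv
    obtain ⟨k, hk⟩ := hv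
    simpa using hind μ hμ k v hk
  have htop : f.maxGenEigenspace 0 = ⊤ := by
    have h1 := Module.End.iSup_maxGenEigenspace_eq_top f
    rw [← h1]
    refine le_antisymm (le_iSup _ 0) (iSup_le fun μ => ?_)
    by_cases hμ : μ = 0
    · subst hμ; exact le_rfl
    · rw [hbot μ hμ]; exact bot_le
  rw [LinearMap.isNilpotent_iff_charpoly, LinearMap.charpoly_eq_X_pow_iff]
  intro v
  have hv : v ∈ f.maxGenEigenspace 0 := htop ▸ Submodule.mem_top
  rw [Module.End.mem_maxGenEigenspace] at hv
  simpa using hv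

end Aux

/-- Let `𝔤` be a finite-dimensional solvable Lie algebra over `ℂ`.  Every
element of `𝔫̄ = {X − ad_{sX} : X ∈ 𝔤} ⊆ 𝔤̄ = Im(ad_s) ⋉ 𝔤` is ad-nilpotent in `𝔤̄`: for
each `X ∈ 𝔤` some power of the operator `ad (−ad_{sX}, X)` kills every element of `𝔤̄`
(the subalgebra of `Der(𝔤) ⋉ 𝔤` of pairs with derivation component in `Im(ad_s)`). -/
theorem nbar_elements_ad_nilpotent
    (L : Type*) [LieRing L] [LieAlgebra ℂ L] [FiniteDimensional ℂ L]
    [LieAlgebra.IsSolvable L]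
    (s : L →ₗ[ℂ] LieDerivation ℂ L L)
    (hss : ∀ X : L, Module.End.IsSemisimple ((s X).toLinearMap : Module.End ℂ L))
    (hnil : ∀ X : L, IsNilpotent (LieAlgebra.ad ℂ L X - (s X).toLinearMap))
    (hcomm : ∀ X : L, Commute ((s X).toLinearMap) (LieAlgebra.ad ℂ L X - (s X).toLinearMap))
    (hhom : ∀ X Y : L, s ⁅X, Y⁆ = ⁅s X, s Y⁆) :
    ∀ X : L, ∃ n : ℕ, ∀ p : LieDerivation ℂ L L × L, p.1 ∈ LinearMap.range s →
      ((LieAlgebra.ad ℂ (LieDerivation ℂ L L × L) ((-(s X), X) : LieDerivation ℂ L L × L)) ^ n)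
        p = 0 := by
  intro X
  classical
  set Der := LieDerivation ℂ L L with hDer
  set T : Module.End ℂ L := (s X).toLinearMap with hT
  set C : Module.End ℂ Der := LieAlgebra.ad ℂ Der (s X) with hC
  have hCapp : ∀ E : Der, C E = ⁅s X, E⁆ := fun E => rfl
  have hCW : ∀ E ∈ LinearMap.range s, C E ∈ LinearMap.range s := by
    rintro _ ⟨Y, rfl⟩
    exact ⟨⁅X, Y⁆, by rw [hhom, hCapp]⟩
  set C' : Module.End ℂ (LinearMap.range s) := C.restrict hCW with hC'
  have hC'nil : IsNilpotent C' := by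
    apply aux_no_eigen_nilpotent
    intro μ hμ v hv
    obtain ⟨Y, hY⟩ := v.2
    have hCE : ⁅s X, (v : Der)⁆ = μ • (v : Der) := by
      have h1 := congrArg Subtype.val hv
      rw [hC', LinearMap.restrict_apply] at h1
      rw [← hCapp]
      exact h1
    have hTe : T * (v : Der).toLinearMap - (v : Der).toLinearMap * T
        = μ • (v : Der).toLinearMap := by
      ext z
      have h1 := congrFun (congrArg (DFunLike.coe) hCE) z
      simp only [LieDerivation.commutator_apply, LieDerivation.smul_apply] at h1
      simpa [Module.End.mul_apply, LinearMap.sub_apply, LinearMap.smul_apply,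
        LieDerivation.coeFn_coe, hT] using h1
    have hsemis : Module.End.IsSemisimple ((v : Der).toLinearMap) := by
      rw [← hY]; exact hss Y
    have he0 : ((v : Der).toLinearMap : Module.End ℂ L) = 0 :=
      Module.End.eq_zero_of_isNilpotent_isSemisimple
        (aux_raise_nilpotent T _ hμ hTe) hsemis
    have hv0 : (v : Der) = 0 := by
      apply LieDerivation.coe_injective
      funext z
      have := LinearMap.congr_fun he0 z
      simpa using this
    exact Subtype.ext (by simpa using hv0)
  obtain ⟨m, hm⟩ := hC'nil
  have hCm : ∀ E ∈ LinearMap.range s, (C ^ m) E = 0 := by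
    intro E hE
    have h1 : (C' ^ m) ⟨E, hE⟩ = 0 := by rw [hm]; rfl
    rw [hC', Module.End.pow_restrict] at h1
    have h2 := congrArg Subtype.val h1
    simpa [LinearMap.restrict_apply] using h2
  obtain ⟨k, hk⟩ := hnil X
  rw [← hT] at hk
  set P := Der × L with hP
  set A : Module.End ℂ P := LieAlgebra.ad ℂ P ((-(s X), X) : P) with hA
  have hbr : ∀ p : P, A p = (-(C p.1), (LieAlgebra.ad ℂ L X - T) p.2 - p.1 X) := by
    intro p
    rw [hA, LieAlgebra.ad_apply]
    show ((⁅-(s X), p.1⁆ : Der), (-(s X)) p.2 - p.1 X + ⁅X, p.2⁆) = _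
    refine Prod.ext ?_ ?_
    · rw [neg_lie, hCapp]
    · show (-(s X)) p.2 - p.1 X + ⁅X, p.2⁆ = _
      rw [LinearMap.sub_apply, LieAlgebra.ad_apply]
      have h3 : (-(s X)) p.2 = -((s X) p.2) := by
        rw [LieDerivation.coe_neg]; rfl
      rw [h3, hT]
      have h4 : (((s X).toLinearMap : L →ₗ[ℂ] L)) p.2 = (s X) p.2 := rfl
      rw [h4]
      simp only [LieAlgebra.ad_apply]
      abel
  have hA1 : ∀ (n : ℕ) (p : P), ((A ^ n) p).1 = ((-C) ^ n) p.1 := by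
    intro n
    induction n with
    | zero => intro p; rfl
    | succ n ih =>
      intro p
      rw [pow_succ, Module.End.mul_apply, ih (A p), hbr, pow_succ, Module.End.mul_apply,
        LinearMap.neg_apply]
  have hA2 : ∀ (j : ℕ) (z : L),
      (A ^ j) ((0, z) : P) = (0, ((LieAlgebra.ad ℂ L X - T) ^ j) z) := by
    intro j
    induction j with
    | zero => intro z; rfl
    | succ j ih =>
      intro z
      have h5 : ((0 : Der) : L → L) X = 0 := by rw [LieDerivation.coe_zero]; rfl
      have h6 : A ((0, z) : P) = (0, (LieAlgebra.ad ℂ L X - T) z) := by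
        rw [hbr]
        refine Prod.ext ?_ ?_
        · show -(C (0 : Der)) = 0
          rw [map_zero, neg_zero]
        · show (LieAlgebra.ad ℂ L X - T) z - (0 : Der) X = (LieAlgebra.ad ℂ L X - T) z
          rw [show ((0 : Der)) X = (0 : L) from h5, sub_zero]
      rw [pow_succ, Module.End.mul_apply, h6, ih, pow_succ, Module.End.mul_apply]
  refine ⟨k + m, fun p hp => ?_⟩
  have hfirst : ((A ^ m) p).1 = 0 := by
    rw [hA1 m p, neg_pow, Module.End.mul_apply, hCm p.1 hp, map_zero]
  have h2 : (A ^ m) p = ((0 : Der), ((A ^ m) p).2) := Prod.ext hfirst rfl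
  rw [pow_add, Module.End.mul_apply, h2, hA2 k, hk]
  simp
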